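/- Consider the coloring of ℤⁿ where a node with coordinate (x₁,...,xₙ) is colored black if and only if a₁x₁ + ⋯ + aₙxₙ ≡ 0 (mod 2n/k + 1), where k divides n and the coefficient sequence (a₁,...,aₙ) consists of k consecutive copies of (1, 2, ..., n/k). Then: (1) no two black nodes are neighboring; (2) every white node is neighboring to exactly k black nodes; (3) the density of black nodes is k/(2n + k). -/
import Mathlib

/-- Two nodes of ℤⁿ are neighboring if they differ by 1 in exactly one coordinate. -/
def LatticeNeighbor {n : ℕ} (x y : Fin n → ℤ) : Prop :=
  ∃ i, (y i = x i + 1 ∨ y i = x i - 1) ∧ ∀ j, j ≠ i → y j = x j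

/-- If `y` agrees with `x` except possibly at `i`, the weighted sums differ by
`a i * (y i - x i)`. -/
lemma lat_sum_update {n : ℕ} (a x y : Fin n → ℤ) (i : Fin n)
    (h : ∀ j, j ≠ i → y j = x j) :
    ∑ j, a j * y j = (∑ j, a j * x j) + a i * (y i - x i) := by
  have key : ∀ j : Fin n, a j * y j
      = a j * x j + (if j = i then a i * (y i - x i) else 0) := by
    intro j
    by_cases hj : j = i
    · subst hj; simp; ring
    · simp [hj, h j hj]
  rw [Finset.sum_congr rfl (fun j _ => key j), Finset.sum_add_distrib]
  simp

lemma lat_dvd_small {m t : ℤ} (h : m ∣ t) (h1 : -m < t) (h2 : t < m) : t = 0 := by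
  by_contra hne
  have h3 : m ∣ |t| := (dvd_abs m t).mpr h
  have h4 : 0 < |t| := abs_pos.mpr hne
  have h5 := Int.le_of_dvd h4 h3
  have h6 : |t| < m := abs_lt.mpr ⟨h1, h2⟩
  linarith

/-- Counting residues: among `0,…,kk*q-1` exactly `kk` numbers have a given
residue `r < q` modulo `q`. -/
lemma lat_count {kk q : ℕ} (r : ℕ) (hr : r < q) :
    (Finset.univ.filter (fun i : Fin (kk * q) => (i : ℕ) % q = r)).card = kk := by
  classical
  have hq : 0 < q := lt_of_le_of_lt (Nat.zero_le r) hr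
  have himg : (Finset.univ.filter (fun i : Fin (kk * q) => (i : ℕ) % q = r)) =
      Finset.image (fun j : Fin kk =>
        (⟨(j : ℕ) * q + r, by
          have hj : (j : ℕ) + 1 ≤ kk := j.isLt
          calc (j : ℕ) * q + r < (j : ℕ) * q + q := by omega
          _ = ((j : ℕ) + 1) * q := by ring
          _ ≤ kk * q := Nat.mul_le_mul_right q hj⟩ : Fin (kk * q))) Finset.univ := by
    ext i
    simp only [Finset.mem_filter, Finset.mem_image, Finset.mem_univ, true_and]
    constructor
    · intro h
      refine ⟨⟨(i : ℕ) / q, ?_⟩, ?_⟩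
      · exact Nat.div_lt_of_lt_mul (by simp [mul_comm, i.isLt])
      · apply Fin.ext
        simp only
        rw [← h]
        exact Nat.div_add_mod' _ _
    · rintro ⟨j, rfl⟩
      simp only
      rw [Nat.add_mod, Nat.mul_mod_left, Nat.zero_add, Nat.mod_mod_of_dvd _ dvd_rfl,
        Nat.mod_eq_of_lt hr]
  rw [himg, Finset.card_image_of_injective _ ?_, Finset.card_univ, Fintype.card_fin]
  intro j1 j2 hEq
  have h1 : (j1 : ℕ) * q + r = (j2 : ℕ) * q + r := congrArg Fin.val hEq
  exact Fin.ext (Nat.eq_of_mul_eq_mul_right hq (by omega : (j1:ℕ) * q = (j2:ℕ) * q))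

lemma lat_count' {n kk q : ℕ} (hn : n = kk * q) (r : ℕ) (hr : r < q) :
    (Finset.univ.filter (fun i : Fin n => (i : ℕ) % q = r)).card = kk := by
  subst hn; exact lat_count r hr

/-- Description of the black neighbors of a node, given that there is a unique
target value `v` with sign `ε`. -/
lemma lat_part2_aux {n : ℕ} (a x : Fin n → ℤ) (m v ε : ℤ)
    (hε : ε = 1 ∨ ε = -1)
    (hbl : ∀ i : Fin n, a i = v → ((∑ j, a j * x j) + a i * ε) % m = 0)
    (hwh : ∀ (i : Fin n) (δ : ℤ), δ = 1 ∨ δ = -1 →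
        ((∑ j, a j * x j) + a i * δ) % m = 0 → a i = v ∧ δ = ε) :
    {y | LatticeNeighbor x y ∧ (∑ j, a j * y j) % m = 0}
      = (fun i => Function.update x i (x i + ε)) '' {i | a i = v} := by
  ext y
  simp only [Set.mem_setOf_eq, Set.mem_image]
  constructor
  · rintro ⟨⟨i, hyi, hrest⟩, hy⟩
    have hδ : y i - x i = 1 ∨ y i - x i = -1 := by omega
    rw [lat_sum_update a x y i hrest] at hy
    obtain ⟨hv, hδε⟩ := hwh i (y i - x i) hδ hy
    refine ⟨i, hv, ?_⟩
    funext j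
    by_cases hj : j = i
    · subst hj; rw [Function.update_self]; omega
    · rw [Function.update_of_ne hj]; exact (hrest j hj).symm
  · rintro ⟨i, hv, rfl⟩
    refine ⟨⟨i, ?_, fun j hj => Function.update_of_ne hj _ _⟩, ?_⟩
    · rw [Function.update_self]
      rcases hε with h | h
      · left; rw [h]
      · right; rw [h]; ring
    · rw [lat_sum_update a x _ i (fun j hj => Function.update_of_ne hj _ _),
        Function.update_self]
      have h2 : x i + ε - x i = ε := by ring
      rw [h2]
      exact hbl i hv

theorem lattice_coloring_k_divides_n
    (n k : ℕ) (hn : 0 < n) (hk : 0 < k) (hkn : k ∣ n) :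
    let m : ℤ := 2 * n / k + 1
    let a : Fin n → ℤ := fun i => (i : ℕ) % (n / k) + 1
    let Black : (Fin n → ℤ) → Prop := fun x => (∑ i, a i * x i) % m = 0
    (∀ x y : Fin n → ℤ, Black x → Black y → ¬ LatticeNeighbor x y) ∧
    (∀ x : Fin n → ℤ, ¬ Black x →
      Set.ncard {y | LatticeNeighbor x y ∧ Black y} = k) ∧
    Set.ncard {x : Fin n → ℤ | (∀ i, 0 ≤ x i ∧ x i < m) ∧ Black x} * (2 * n + k)
      = k * m.toNat ^ n := by
  intro m a Black
  classical
  obtain ⟨q, hq⟩ := hkn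
  have hq0 : 0 < q := by
    rcases Nat.eq_zero_or_pos q with h | h
    · subst h; simp [hq] at hn
    · exact h
  have hnk : n / k = q := by rw [hq, Nat.mul_div_cancel_left _ hk]
  have hk' : (k : ℤ) ≠ 0 := by exact_mod_cast hk.ne'
  have hm : m = 2 * q + 1 := by
    show 2 * (n : ℤ) / k + 1 = 2 * q + 1
    have h1 : (2 * (n : ℤ)) = k * (2 * q) := by rw [hq]; push_cast; ring
    rw [h1, Int.mul_ediv_cancel_left _ hk']
  have hm0 : (0 : ℤ) < m := by rw [hm]; positivity
  have ha : ∀ i : Fin n, 1 ≤ a i ∧ a i ≤ q := by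
    intro i
    have h1 : (i : ℕ) % (n / k) < q := by rw [hnk]; exact Nat.mod_lt _ hq0
    have h2 : a i = (((i : ℕ) % (n / k) : ℕ) : ℤ) + 1 := rfl
    constructor
    · rw [h2]; omega
    · rw [h2]; omega
  refine ⟨?_, ?_, ?_⟩
  · -- no two black nodes are neighbors
    rintro x y hx hy ⟨i, hyi, hrest⟩
    have hx' : (∑ j, a j * x j) % m = 0 := hx
    have hy' : (∑ j, a j * y j) % m = 0 := hy
    rw [lat_sum_update a x y i hrest] at hy'
    have h1 : m ∣ ∑ j, a j * x j := Int.dvd_of_emod_eq_zero hx'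
    have h2 : m ∣ (∑ j, a j * x j) + a i * (y i - x i) :=
      Int.dvd_of_emod_eq_zero hy'
    have h3 : m ∣ a i * (y i - x i) := (Int.dvd_add_right h1).mp h2
    have hδ : y i - x i = 1 ∨ y i - x i = -1 := by
      rcases hyi with h | h <;> omega
    have h4 : m ∣ a i := by
      rcases hδ with h | h <;> rw [h] at h3 <;> simpa using h3
    have h5 : m ≤ a i := Int.le_of_dvd (by linarith [(ha i).1]) h4
    have h6 := (ha i).2
    omega
  · -- every white node has exactly k black neighbors
    intro x hx
    set S : ℤ := ∑ j, a j * x j with hS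
    have hsne : S % m ≠ 0 := hx
    set s : ℤ := S % m with hs
    have hs0 : 0 ≤ s := Int.emod_nonneg _ (ne_of_gt hm0)
    have hs1 : s < m := Int.emod_lt_of_pos _ hm0
    have hms : m ∣ S - s := ⟨S / m, by rw [hs, Int.emod_def]; ring⟩
    -- the target value and sign
    have key : ∃ v ε : ℤ, (1 ≤ v ∧ v ≤ q) ∧ (ε = 1 ∨ ε = -1) ∧
        (∀ i : Fin n, a i = v → (S + a i * ε) % m = 0) ∧
        (∀ (i : Fin n) (δ : ℤ), δ = 1 ∨ δ = -1 →
          (S + a i * δ) % m = 0 → a i = v ∧ δ = ε) := by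
      by_cases hcase : s ≤ q
      · refine ⟨s, -1, ⟨by omega, hcase⟩, Or.inr rfl, ?_, ?_⟩
        · intro i hai
          apply Int.emod_eq_zero_of_dvd
          rw [hai]
          have : S + s * (-1) = S - s := by ring
          rw [this]; exact hms
        · intro i δ hδ h0
          have hdvd : m ∣ S + a i * δ := Int.dvd_of_emod_eq_zero h0
          have h2 : m ∣ s + a i * δ := by
            have h3 := dvd_sub hdvd hms
            have h4 : S + a i * δ - (S - s) = s + a i * δ := by ring
            rwa [h4] at h3
          have hai1 := (ha i).1
          have hai2 := (ha i).2
          rcases hδ with h | h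
          · exfalso
            subst h
            have := lat_dvd_small h2 (by omega) (by omega)
            omega
          · subst h
            have := lat_dvd_small h2 (by omega) (by omega)
            omega
      · refine ⟨m - s, 1, ⟨by omega, by omega⟩, Or.inl rfl, ?_, ?_⟩
        · intro i hai
          apply Int.emod_eq_zero_of_dvd
          rw [hai]
          have h1 : S + (m - s) * 1 = (S - s) + m := by ring
          rw [h1]
          exact dvd_add hms dvd_rfl
        · intro i δ hδ h0
          have hdvd : m ∣ S + a i * δ := Int.dvd_of_emod_eq_zero h0
          have h2 : m ∣ s + a i * δ := by
            have h3 := dvd_sub hdvd hms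
            have h4 : S + a i * δ - (S - s) = s + a i * δ := by ring
            rwa [h4] at h3
          have hai1 := (ha i).1
          have hai2 := (ha i).2
          rcases hδ with h | h
          · subst h
            have h5 : m ∣ s + a i * 1 - m := dvd_sub h2 dvd_rfl
            have := lat_dvd_small h5 (by omega) (by omega)
            omega
          · exfalso
            subst h
            have := lat_dvd_small h2 (by omega) (by omega)
            omega
    obtain ⟨v, ε, hv, hε, hbl, hwh⟩ := key
    have hset : {y | LatticeNeighbor x y ∧ Black y}
        = (fun i => Function.update x i (x i + ε)) '' {i | a i = v} :=
      lat_part2_aux a x m v ε hε hbl hwh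
    rw [hset]
    have hinj : Function.Injective (fun i : Fin n => Function.update x i (x i + ε)) := by
      intro i i' hEq
      by_contra hne
      have h1 := congrFun hEq i
      simp only at h1
      rw [Function.update_self, Function.update_of_ne hne] at h1
      rcases hε with h | h <;> omega
    rw [Set.ncard_image_of_injective _ hinj]
    have hsetF : {i : Fin n | a i = v}
        = ↑(Finset.univ.filter (fun i : Fin n => a i = v)) := by
      ext i; simp
    rw [hsetF, Set.ncard_coe_finset]
    have hfilter : (Finset.univ.filter (fun i : Fin n => a i = v))
        = (Finset.univ.filter (fun i : Fin n => (i : ℕ) % q = (v - 1).toNat)) := by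
      apply Finset.filter_congr
      intro i _
      have h2 : a i = (((i : ℕ) % (n / k) : ℕ) : ℤ) + 1 := rfl
      rw [h2, hnk]
      omega
    rw [hfilter]
    exact lat_count' hq (v - 1).toNat (by omega)
  · -- density
    set i0 : Fin n := ⟨0, hn⟩ with hi0
    have hai0 : a i0 = 1 := by
      have h2 : a i0 = (((i0 : ℕ) % (n / k) : ℕ) : ℤ) + 1 := rfl
      rw [h2]
      simp [hi0]
    set M : ℕ := 2 * q + 1 with hM
    have hmM : m = (M : ℤ) := by rw [hm, hM]; push_cast; ring
    set R : ({j : Fin n // j ≠ i0} → Fin M) → ℤ :=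
      fun w => ∑ j : Fin n, a j * (if h : j = i0 then 0 else ((w ⟨j, h⟩ : ℕ) : ℤ))
      with hR
    set F : ({j : Fin n // j ≠ i0} → Fin M) → (Fin n → ℤ) :=
      fun w j => if h : j = i0 then (- R w) % m else ((w ⟨j, h⟩ : ℕ) : ℤ) with hF
    have hFg : ∀ w (j : Fin n) (h : j ≠ i0), F w j = ((w ⟨j, h⟩ : ℕ) : ℤ) := by
      intro w j h; simp only [hF, dif_neg h]
    have hFi0 : ∀ w, F w i0 = (- R w) % m := by
      intro w; simp only [hF, dif_pos rfl]
    have hmem : ∀ w, F w ∈ {x : Fin n → ℤ | (∀ i, 0 ≤ x i ∧ x i < m) ∧ Black x} := by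
      intro w
      constructor
      · intro j
        by_cases h : j = i0
        · subst h
          rw [hFi0]
          exact ⟨Int.emod_nonneg _ (ne_of_gt hm0), Int.emod_lt_of_pos _ hm0⟩
        · rw [hFg w j h]
          refine ⟨by positivity, ?_⟩
          rw [hmM]
          exact_mod_cast (w ⟨j, h⟩).isLt
      · show (∑ j, a j * F w j) % m = 0
        have hsplit : ∑ j, a j * F w j = R w + (- R w) % m := by
          have h1 := lat_sum_update a
            (fun j => if h : j = i0 then 0 else ((w ⟨j, h⟩ : ℕ) : ℤ)) (F w) i0
            (fun j hj => by rw [hFg w j hj]; simp [hj])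
          rw [h1, hFi0, hai0, one_mul]
          show R w + (-R w % m - 0) = R w + -R w % m
          ring
        rw [hsplit]
        conv_lhs => rw [Int.add_emod, Int.emod_emod_of_dvd _ dvd_rfl, ← Int.add_emod]
        simp
    have hbij : Function.Bijective
        (fun w => (⟨F w, hmem w⟩ :
          {x : Fin n → ℤ | (∀ i, 0 ≤ x i ∧ x i < m) ∧ Black x})) := by
      constructor
      · intro w w' hEq
        have hEq' : F w = F w' := congrArg Subtype.val hEq
        funext j
        have h1 := congrFun hEq' j.1
        rw [hFg w j.1 j.2, hFg w' j.1 j.2] at h1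
        exact Fin.ext (by exact_mod_cast h1)
      · rintro ⟨x, hx1, hx2⟩
        have hxB : (∑ j, a j * x j) % m = 0 := hx2
        set w0 : {j : Fin n // j ≠ i0} → Fin M := fun j => ⟨(x j.1).toNat, by
          have h1 := hx1 j.1; rw [hmM] at h1; omega⟩ with hw0
        refine ⟨w0, ?_⟩
        apply Subtype.ext
        simp only
        funext j
        by_cases h : j = i0
        · subst h
          rw [hFi0]
          have hRval : R w0 = (∑ j, a j * x j) - x i0 := by
            have e1 : R w0 = ∑ j : Fin n, a j * (if h : j = i0 then (0:ℤ) else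
                (((x j).toNat : ℕ) : ℤ)) := rfl
            rw [e1]
            have h2 : ∀ j : Fin n, a j * (if h : j = i0 then (0:ℤ) else
                (((x j).toNat : ℕ) : ℤ))
                = a j * x j - (if j = i0 then a j * x j else 0) := by
              intro j
              by_cases hj : j = i0
              · subst hj; simp
              · rw [dif_neg hj, if_neg hj, Int.toNat_of_nonneg (hx1 j).1]
                ring
            rw [Finset.sum_congr rfl (fun j _ => h2 j), Finset.sum_sub_distrib]
            simp [hai0]
          rw [hRval]
          have h3 : -((∑ j, a j * x j) - x i0) = x i0 - (∑ j, a j * x j) := by ring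
          rw [h3, Int.sub_emod, hxB, sub_zero, Int.emod_emod_of_dvd _ dvd_rfl,
            Int.emod_eq_of_lt (hx1 i0).1 (hx1 i0).2]
        · rw [hFg w0 j h]
          exact Int.toNat_of_nonneg (hx1 j).1
    have hcard : Set.ncard {x : Fin n → ℤ | (∀ i, 0 ≤ x i ∧ x i < m) ∧ Black x}
        = M ^ (n - 1) := by
      rw [← Nat.card_coe_set_eq, ← Nat.card_eq_of_bijective _ hbij, Nat.card_fun,
        Nat.card_eq_fintype_card, Nat.card_eq_fintype_card, Fintype.card_fin]
      congr 1
      simp [Fintype.card_subtype_compl]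
    rw [hcard]
    have h2 : m.toNat = M := by rw [hmM]; exact Int.toNat_natCast M
    rw [h2]
    have h3 : 2 * n + k = k * M := by rw [hq, hM]; ring
    rw [h3]
    have hn1 : n - 1 + 1 = n := Nat.succ_pred_eq_of_pos hn
    calc M ^ (n - 1) * (k * M) = k * (M ^ (n - 1) * M) := by ring
      _ = k * M ^ n := by rw [← pow_succ, hn1]
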